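/- Let G = (U, W; E) be a finite bipartite graph possibly with parallel edges, with preference functions p_v for every vertex v (ties allowed), and a set C ⊆ U ∪ W of critical vertices. Then there exists a matching M that is critical and has no blocking edge e = (u, w) such that M \ {M(u), M(w)} ∪ {e} is still critical. (That is, a critical matching satisfying the strengthened form of relaxed stability always exists.) -/

import Mathlib

open scoped Classical

/-- `M` is a matching: every vertex is incident to at most one edge of `M`. -/
def IsMatching {U W E : Type*} (eu : E → U) (ew : E → W) (M : Finset E) : Prop :=
  ∀ e ∈ M, ∀ f ∈ M, e ≠ f → eu e ≠ eu f ∧ ew e ≠ ew f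

/-- The preference value `p_u(M(u))` of the `M`-partner of `u ∈ U` (with `p_u(∅) = 0`). -/
noncomputable def valU {U E : Type*} (eu : E → U) (pU : E → ℝ) (M : Finset E)
    (u : U) : ℝ :=
  ∑ f ∈ M.filter (fun f => eu f = u), pU f

/-- The preference value `p_w(M(w))` of the `M`-partner of `w ∈ W` (with `p_w(∅) = 0`). -/
noncomputable def valW {W E : Type*} (ew : E → W) (pW : E → ℝ) (M : Finset E)
    (w : W) : ℝ :=
  ∑ f ∈ M.filter (fun f => ew f = w), pW f

/-- The edge `e = (u, w) ∉ M` blocks the matching `M`. -/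
noncomputable def Blocks {U W E : Type*} (eu : E → U) (ew : E → W) (pU pW : E → ℝ)
    (M : Finset E) (e : E) : Prop :=
  e ∉ M ∧ pU e > valU eu pU M (eu e) ∧ pW e > valW ew pW M (ew e)

/-- The number of critical vertices (elements of `C ⊆ U ⊕ W`) covered by `M`. -/
noncomputable def critCovered {U W E : Type*} (eu : E → U) (ew : E → W)
    (C : Finset (U ⊕ W)) (M : Finset E) : ℕ :=
  (C.filter (fun v =>
    Sum.elim (fun u => ∃ e ∈ M, eu e = u) (fun w => ∃ e ∈ M, ew e = w) v)).card

/-- `M` is critical: no matching covers strictly more critical vertices than `M`. -/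
def IsCritical {U W E : Type*} (eu : E → U) (ew : E → W) (C : Finset (U ⊕ W))
    (M : Finset E) : Prop :=
  ∀ N : Finset E, IsMatching eu ew N → critCovered eu ew C N ≤ critCovered eu ew C M

/-- `M \ {M(u), M(w)} ∪ {e}` for `e = (u, w)`. -/
noncomputable def swapIn {U W E : Type*} [DecidableEq E] (eu : E → U) (ew : E → W)
    (M : Finset E) (e : E) : Finset E :=
  insert e (M.filter (fun f => eu f ≠ eu e ∧ ew f ≠ ew e))


section ST

variable {U W E : Type*} (eu : E → U) (ew : E → W)

/-- existence of a stable matching wrt injective keys, within an edge set `A`. -/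
theorem exists_stable {K K' : Type*} [LinearOrder K] [LinearOrder K']
    (kU : E → K) (kW : E → K') (hkU : Function.Injective kU) (hkW : Function.Injective kW)
    (A : Finset E) :
    ∃ M ⊆ A, IsMatching eu ew M ∧ ∀ e ∈ A, e ∉ M →
      (∃ f ∈ M, eu f = eu e ∧ kU e < kU f) ∨ (∃ f ∈ M, ew f = ew e ∧ kW e < kW f) := by
  induction A using Finset.strongInduction with
  | _ A ih =>
    by_cases hpair : ∃ e1 ∈ A, ∃ e2 ∈ A, e1 ≠ e2 ∧ ew e1 = ew e2 ∧
        (∀ f ∈ A, eu f = eu e1 → kU f ≤ kU e1) ∧ kW e2 < kW e1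
    · obtain ⟨e1, he1, e2, he2, hne, hew, htop, hkw⟩ := hpair
      obtain ⟨M, hMA, hM, hst⟩ := ih (A.erase e2) (Finset.erase_ssubset he2)
      refine ⟨M, hMA.trans (Finset.erase_subset _ _), hM, ?_⟩
      intro e heA heM
      by_cases he : e = e2
      · subst he
        by_cases h1M : e1 ∈ M
        · exact Or.inr ⟨e1, h1M, hew, hkw⟩
        · have he1' : e1 ∈ A.erase e := Finset.mem_erase.2 ⟨hne, he1⟩
          rcases hst e1 he1' h1M with ⟨f, hf, hfu, hlt⟩ | ⟨f, hf, hfw, hlt⟩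
          · exact absurd (htop f (hMA.trans (Finset.erase_subset _ _) hf) hfu) (not_le.2 hlt)
          · exact Or.inr ⟨f, hf, hew ▸ hfw, hkw.trans hlt⟩
      · exact hst e (Finset.mem_erase.2 ⟨he, heA⟩) heM
    · push_neg at hpair
      refine ⟨A.filter (fun e => ∀ f ∈ A, eu f = eu e → kU f ≤ kU e), Finset.filter_subset _ _,
        ?_, ?_⟩
      · intro e heM f hfM hne
        rw [Finset.mem_filter] at heM hfM
        constructor
        · intro hequ
          have h1 := heM.2 f hfM.1 hequ.symm
          have h2 := hfM.2 e heM.1 hequ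
          exact hne (hkU (le_antisymm h2 h1))
        · intro heqw
          rcases lt_trichotomy (kW e) (kW f) with h | h | h
          · exact absurd h (not_lt.2 (hpair f hfM.1 e heM.1 hne.symm heqw.symm hfM.2))
          · exact hne (hkW h)
          · exact absurd h (not_lt.2 (hpair e heM.1 f hfM.1 hne heqw heM.2))
      · intro e heA heM
        rw [Finset.mem_filter, not_and] at heM
        have hne : (A.filter (fun f => eu f = eu e)).Nonempty :=
          ⟨e, Finset.mem_filter.2 ⟨heA, rfl⟩⟩
        obtain ⟨g, hg, hgmax⟩ := Finset.exists_max_image _ kU hne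
        rw [Finset.mem_filter] at hg
        left
        have hgM : g ∈ A.filter (fun e => ∀ f ∈ A, eu f = eu e → kU f ≤ kU e) := by
          refine Finset.mem_filter.2 ⟨hg.1, fun f hf hfu => ?_⟩
          exact hgmax f (Finset.mem_filter.2 ⟨hf, hfu.trans hg.2⟩)
        refine ⟨g, hgM, hg.2, ?_⟩
        obtain ⟨f, hf, hfu, hflt⟩ : ∃ f ∈ A, eu f = eu e ∧ kU e < kU f := by
          by_contra hc
          push_neg at hc
          exact (heM heA) fun f hf hfu => hc f hf hfu
        exact lt_of_lt_of_le hflt (hgmax f (Finset.mem_filter.2 ⟨hf, hfu⟩))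

end ST

section DM

variable {U W E : Type*} [DecidableEq E]

/-- edges reachable from the `M1`-edge at `a` by alternating mates. -/
inductive Reach (eu : E → U) (ew : E → W) (M1 M2 : Finset E) (a : U) : E → Prop
  | base : ∀ f ∈ M1, eu f = a → Reach eu ew M1 M2 a f
  | stepW : ∀ f g, Reach eu ew M1 M2 a f → f ∈ M1 → g ∈ M2 → ew g = ew f →
      Reach eu ew M1 M2 a g
  | stepU : ∀ f g, Reach eu ew M1 M2 a f → f ∈ M2 → g ∈ M1 → eu g = eu f →
      Reach eu ew M1 M2 a g

variable (eu : E → U) (ew : E → W) (M1 M2 : Finset E) (a : U)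

noncomputable def flipDM : Finset E :=
  (M2.filter (fun f => ¬ Reach eu ew M1 M2 a f)) ∪ (M1.filter (Reach eu ew M1 M2 a))

variable {eu ew M1 M2 a}

lemma reach_M2_origin {g : E} (hr : Reach eu ew M1 M2 a g) (hg : g ∈ M2) :
    ∃ f, Reach eu ew M1 M2 a f ∧ f ∈ M1 ∧ ew f = ew g := by
  induction hr with
  | base f hf hfa => exact ⟨f, Reach.base f hf hfa, hf, rfl⟩
  | stepW f g' hr hf hg' hew ih => exact ⟨f, hr, hf, hew.symm⟩
  | stepU f g' hr hf hg' heu ih => exact ⟨g', Reach.stepU f g' hr hf hg' heu, hg', rfl⟩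

lemma reach_M1_origin {g : E} (hr : Reach eu ew M1 M2 a g) (hg : g ∈ M1) :
    eu g = a ∨ ∃ f, Reach eu ew M1 M2 a f ∧ f ∈ M2 ∧ eu f = eu g := by
  induction hr with
  | base f hf hfa => exact Or.inl hfa
  | stepW f g' hr hf hg' hew ih => exact Or.inr ⟨g', Reach.stepW f g' hr hf hg' hew, hg', rfl⟩
  | stepU f g' hr hf hg' heu ih => exact Or.inr ⟨f, hr, hf, heu.symm⟩

variable (hM1 : IsMatching eu ew M1) (hM2 : IsMatching eu ew M2)
  (ha2 : ¬ ∃ e ∈ M2, eu e = a)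

include hM1 hM2 ha2 in
lemma flipDM_matching : IsMatching eu ew (flipDM eu ew M1 M2 a) := by
  have key : ∀ e1 ∈ M2.filter (fun f => ¬ Reach eu ew M1 M2 a f),
      ∀ e2 ∈ M1.filter (Reach eu ew M1 M2 a), eu e1 ≠ eu e2 ∧ ew e1 ≠ ew e2 := by
    intro e1 h1 e2 h2
    rw [Finset.mem_filter] at h1 h2
    constructor
    · intro hequ
      rcases reach_M1_origin h2.2 h2.1 with hA | ⟨f, hrf, hfM2, hfu⟩
      · exact ha2 ⟨e1, h1.1, hequ.trans hA⟩
      · have : f = e1 := by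
          by_contra hne
          exact (hM2 f hfM2 e1 h1.1 hne).1 (hfu.trans hequ.symm)
        exact h1.2 (this ▸ hrf)
    · intro heqw
      exact h1.2 (Reach.stepW e2 e1 h2.2 h2.1 h1.1 heqw)
  intro e he f hf hne
  rw [flipDM, Finset.mem_union] at he hf
  rcases he with he | he <;> rcases hf with hf | hf
  · exact hM2 e (Finset.mem_filter.1 he).1 f (Finset.mem_filter.1 hf).1 hne
  · exact key e he f hf
  · exact ⟨(key f hf e he).1.symm, (key f hf e he).2.symm⟩
  · exact hM1 e (Finset.mem_filter.1 he).1 f (Finset.mem_filter.1 hf).1 hne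

include hM2 in
lemma flipDM_covers_W {w : W} (h : ∃ e ∈ M2, ew e = w) :
    ∃ e ∈ flipDM eu ew M1 M2 a, ew e = w := by
  obtain ⟨g, hg, hgw⟩ := h
  by_cases hr : Reach eu ew M1 M2 a g
  · obtain ⟨f, hrf, hf1, hfw⟩ := reach_M2_origin hr hg
    exact ⟨f, Finset.mem_union_right _ (Finset.mem_filter.2 ⟨hf1, hrf⟩), hfw.trans hgw⟩
  · exact ⟨g, Finset.mem_union_left _ (Finset.mem_filter.2 ⟨hg, hr⟩), hgw⟩

lemma flipDM_covers_U {u : U} (h2 : ∃ e ∈ M2, eu e = u) (h1 : ∃ e ∈ M1, eu e = u) :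
    ∃ e ∈ flipDM eu ew M1 M2 a, eu e = u := by
  obtain ⟨g, hg, hgu⟩ := h2
  by_cases hr : Reach eu ew M1 M2 a g
  · obtain ⟨f, hf, hfu⟩ := h1
    exact ⟨f, Finset.mem_union_right _ (Finset.mem_filter.2
      ⟨hf, Reach.stepU g f hr hg hf (hfu.trans hgu.symm)⟩), hfu⟩
  · exact ⟨g, Finset.mem_union_left _ (Finset.mem_filter.2 ⟨hg, hr⟩), hgu⟩

lemma flipDM_covers_a (h1 : ∃ e ∈ M1, eu e = a) :
    ∃ e ∈ flipDM eu ew M1 M2 a, eu e = a := by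
  obtain ⟨f, hf, hfu⟩ := h1
  exact ⟨f, Finset.mem_union_right _ (Finset.mem_filter.2 ⟨hf, Reach.base f hf hfu⟩), hfu⟩

end DM

section DMmain

variable {U W E : Type*} [DecidableEq E] (eu : E → U) (ew : E → W)

/-- Mendelsohn–Dulmage: a matching covering `A` on the left and `B` on the right. -/
theorem dm_main (M1 : Finset E) (hM1 : IsMatching eu ew M1) (A : Finset U) (B : Finset W)
    (hA : ∀ u ∈ A, ∃ e ∈ M1, eu e = u) :
    ∀ (n : ℕ) (M2 : Finset E), IsMatching eu ew M2 → (∀ w ∈ B, ∃ e ∈ M2, ew e = w) →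
    (A.filter (fun u => ¬ ∃ e ∈ M2, eu e = u)).card ≤ n →
    ∃ N, IsMatching eu ew N ∧ (∀ u ∈ A, ∃ e ∈ N, eu e = u) ∧
      (∀ w ∈ B, ∃ e ∈ N, ew e = w) := by
  intro n
  induction n with
  | zero =>
    intro M2 hM2 hB hcard
    refine ⟨M2, hM2, fun u hu => ?_, hB⟩
    by_contra hc
    have hmem : u ∈ A.filter (fun u => ¬ ∃ e ∈ M2, eu e = u) := Finset.mem_filter.2 ⟨hu, hc⟩
    have := Finset.card_eq_zero.1 (Nat.le_zero.1 hcard)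
    rw [this] at hmem
    exact absurd hmem (Finset.notMem_empty u)
  | succ n ih =>
    intro M2 hM2 hB hcard
    by_cases hemp : (A.filter (fun u => ¬ ∃ e ∈ M2, eu e = u)) = ∅
    · refine ⟨M2, hM2, fun u hu => ?_, hB⟩
      by_contra hc
      have hmem : u ∈ A.filter (fun u => ¬ ∃ e ∈ M2, eu e = u) := Finset.mem_filter.2 ⟨hu, hc⟩
      rw [hemp] at hmem
      exact absurd hmem (Finset.notMem_empty u)
    · obtain ⟨a, ha⟩ := Finset.nonempty_iff_ne_empty.2 hemp
      rw [Finset.mem_filter] at ha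
      have ha1 : ∃ e ∈ M1, eu e = a := hA a ha.1
      refine ih (flipDM eu ew M1 M2 a) (flipDM_matching hM1 hM2 ha.2) ?_ ?_
      · exact fun w hw => flipDM_covers_W (hM2 := hM2) (hB w hw)
      · have hsub : (A.filter (fun u => ¬ ∃ e ∈ flipDM eu ew M1 M2 a, eu e = u)) ⊆
            (A.filter (fun u => ¬ ∃ e ∈ M2, eu e = u)).erase a := by
          intro u hu
          rw [Finset.mem_filter] at hu
          refine Finset.mem_erase.2 ⟨?_, Finset.mem_filter.2 ⟨hu.1, ?_⟩⟩
          · rintro rfl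
            exact hu.2 (flipDM_covers_a ha1)
          · intro hc
            exact hu.2 (flipDM_covers_U (h2 := hc) (hA u hu.1))
        calc _ ≤ ((A.filter (fun u => ¬ ∃ e ∈ M2, eu e = u)).erase a).card :=
              Finset.card_le_card hsub
          _ ≤ n := by
              rw [Finset.card_erase_of_mem (Finset.mem_filter.2 ha)]
              omega

end DMmain

section Konig

variable {U W E : Type*} [Fintype U] [Fintype W] [Fintype E]

/-- One-sided König: a fractional-style cover `(yU, yW)` of the demand
`[eu e ∈ AU]` together with a matching covering at least `∑ y` vertices of `AU`. -/
theorem konig_side (eu : E → U) (ew : E → W) (AU : Finset U) :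
    ∃ (yU : U → ℕ) (yW : W → ℕ) (ML : Finset E), IsMatching eu ew ML ∧
      (∀ e, eu e ∈ AU → 1 ≤ yU (eu e) + yW (ew e)) ∧
      (∑ u, yU u) + (∑ w, yW w) ≤ (AU.filter (fun u => ∃ e ∈ ML, eu e = u)).card := by
  set nbr : U → Finset W := fun u => Finset.univ.filter (fun w => ∃ e, eu e = u ∧ ew e = w)
    with hnbr
  obtain ⟨S, hSpow, hSmax⟩ := Finset.exists_max_image AU.powerset
    (fun S => (S.card : ℤ) - ((S.biUnion nbr).card : ℤ)) ⟨∅, Finset.empty_mem_powerset _⟩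
  have hSsub : S ⊆ AU := Finset.mem_powerset.1 hSpow
  set NS := S.biUnion nbr with hNS
  have hNSle : NS.card ≤ S.card := by
    have h0 : ((∅ : Finset U).biUnion nbr) = ∅ := by simp
    have := hSmax ∅ (Finset.empty_mem_powerset _)
    rw [h0] at this
    simp only [Finset.card_empty] at this
    omega
  set D : ℕ := S.card - NS.card with hD
  have hDZ : (D : ℤ) = (S.card : ℤ) - NS.card := by omega
  -- Hall instance
  set t : {u // u ∈ AU} → Finset (W ⊕ Fin D) := fun u =>
    ((nbr u.1).map ⟨Sum.inl, Sum.inl_injective⟩) ∪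
    ((Finset.univ : Finset (Fin D)).map ⟨Sum.inr, Sum.inr_injective⟩) with ht
  have hall : ∀ s : Finset {u // u ∈ AU}, s.card ≤ (s.biUnion t).card := by
    intro s
    rcases s.eq_empty_or_nonempty with rfl | ⟨u0, hu0⟩
    · simp
    set S' := s.image Subtype.val with hS'
    have hsub : ((S'.biUnion nbr).map ⟨Sum.inl, Sum.inl_injective⟩) ∪
        ((Finset.univ : Finset (Fin D)).map ⟨Sum.inr, Sum.inr_injective⟩) ⊆ s.biUnion t := by
      intro x hx
      rw [Finset.mem_union] at hx
      rcases hx with hx | hx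
      · obtain ⟨w, hw, rfl⟩ := Finset.mem_map.1 hx
        obtain ⟨u, hu, hwnbr⟩ := Finset.mem_biUnion.1 hw
        obtain ⟨u', hu', rfl⟩ := Finset.mem_image.1 hu
        exact Finset.mem_biUnion.2 ⟨u', hu', Finset.mem_union_left _
          (Finset.mem_map.2 ⟨w, hwnbr, rfl⟩)⟩
      · exact Finset.mem_biUnion.2 ⟨u0, hu0, Finset.mem_union_right _ hx⟩
    have hdisj : Disjoint ((S'.biUnion nbr).map ⟨Sum.inl, Sum.inl_injective⟩)
        ((Finset.univ : Finset (Fin D)).map ⟨Sum.inr, Sum.inr_injective⟩) := by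
      rw [Finset.disjoint_left]
      rintro x hx hx'
      obtain ⟨w, _, rfl⟩ := Finset.mem_map.1 hx
      obtain ⟨d, _, h⟩ := Finset.mem_map.1 hx'
      exact Sum.inl_ne_inr h.symm
    have hcard1 : (S'.biUnion nbr).card + D ≤ (s.biUnion t).card := by
      have := Finset.card_le_card hsub
      rwa [Finset.card_union_of_disjoint hdisj, Finset.card_map, Finset.card_map,
        Finset.card_univ, Fintype.card_fin] at this
    have hS'sub : S' ⊆ AU := by
      intro u hu
      obtain ⟨u', _, rfl⟩ := Finset.mem_image.1 hu
      exact u'.2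
    have hmax := hSmax S' (Finset.mem_powerset.2 hS'sub)
    have hscard : s.card = S'.card :=
      (Finset.card_image_of_injective _ Subtype.val_injective).symm
    omega
  obtain ⟨f, hfinj, hft⟩ := (Finset.all_card_le_biUnion_card_iff_exists_injective t).1 hall
  -- chosen edges
  have edge_ex : ∀ (u : {u // u ∈ AU}) (w : W), f u = Sum.inl w →
      ∃ e, eu e = u.1 ∧ ew e = w := by
    intro u w hw
    have := hft u
    rw [hw, ht] at this
    rcases Finset.mem_union.1 this with h | h
    · obtain ⟨w', hw', heq⟩ := Finset.mem_map.1 h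
      obtain rfl : w' = w := Sum.inl_injective heq
      simpa [hnbr] using (Finset.mem_filter.1 hw').2
    · obtain ⟨d, _, heq⟩ := Finset.mem_map.1 h
      exact absurd heq (by simp)
  set g : {u // u ∈ AU} → Finset E := fun u =>
    if h : ∃ w, f u = Sum.inl w then {(edge_ex u h.choose h.choose_spec).choose} else ∅
    with hg
  have gspec : ∀ u e, e ∈ g u → eu e = u.1 ∧ f u = Sum.inl (ew e) := by
    intro u e he
    simp only [hg] at he
    split_ifs at he with h
    · rw [Finset.mem_singleton] at he
      subst he
      obtain ⟨h1, h2⟩ := (edge_ex u h.choose h.choose_spec).choose_spec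
      exact ⟨h1, by rw [h2]; exact h.choose_spec⟩
    · exact absurd he (Finset.notMem_empty _)
  set ML := Finset.univ.biUnion g with hML
  have MLspec : ∀ e ∈ ML, ∃ u, e ∈ g u := by
    intro e he
    obtain ⟨u, _, hu⟩ := Finset.mem_biUnion.1 he
    exact ⟨u, hu⟩
  have hMLmatch : IsMatching eu ew ML := by
    intro e he e' he' hne
    obtain ⟨u, hu⟩ := MLspec e he
    obtain ⟨u', hu'⟩ := MLspec e' he'
    obtain ⟨heu, hef⟩ := gspec u e hu
    obtain ⟨heu', hef'⟩ := gspec u' e' hu'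
    have huu : u ≠ u' := by
      rintro rfl
      simp only [hg] at hu hu'
      split_ifs at hu hu' with h
      · rw [Finset.mem_singleton] at hu hu'
        exact hne (hu.trans hu'.symm)
      · exact absurd hu (Finset.notMem_empty _)
    constructor
    · rw [heu, heu']
      exact fun h => huu (Subtype.val_injective h)
    · intro h
      rw [h] at hef
      exact huu (hfinj (hef.trans hef'.symm))
  refine ⟨fun u => if u ∈ AU \ S then 1 else 0, fun w => if w ∈ NS then 1 else 0, ML,
    hMLmatch, ?_, ?_⟩
  · intro e he
    by_cases hs : eu e ∈ S
    · have : ew e ∈ NS := Finset.mem_biUnion.2 ⟨eu e, hs,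
        Finset.mem_filter.2 ⟨Finset.mem_univ _, ⟨e, rfl, rfl⟩⟩⟩
      simp [this]
    · have : eu e ∈ AU \ S := Finset.mem_sdiff.2 ⟨he, hs⟩
      simp [this]
  · have hyU : (∑ u, if u ∈ AU \ S then 1 else 0) = (AU \ S).card := by
      rw [← Finset.card_filter]
      congr 1
      ext u
      simp
    have hyW : (∑ w, if w ∈ NS then 1 else 0) = NS.card := by
      rw [← Finset.card_filter]
      congr 1
      ext w
      simp
    rw [hyU, hyW]
    -- covered count
    have hcov : ((Finset.univ : Finset {u // u ∈ AU}).filter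
        (fun u => ∃ w, f u = Sum.inl w)).image Subtype.val ⊆
        AU.filter (fun u => ∃ e ∈ ML, eu e = u) := by
      intro u hu
      obtain ⟨u', hu', rfl⟩ := Finset.mem_image.1 hu
      rw [Finset.mem_filter] at hu'
      refine Finset.mem_filter.2 ⟨u'.2, ?_⟩
      have hne : (g u').Nonempty := by
        simp only [hg]
        split_ifs with h
        · exact ⟨_, Finset.mem_singleton_self _⟩
        · exact absurd hu'.2 h
      obtain ⟨e, he⟩ := hne
      exact ⟨e, Finset.mem_biUnion.2 ⟨u', Finset.mem_univ _, he⟩, (gspec u' e he).1⟩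
    have hcovcard : (AU.card - D : ℤ) ≤
        ((AU.filter (fun u => ∃ e ∈ ML, eu e = u)).card : ℤ) := by
      have h1 : ((Finset.univ : Finset {u // u ∈ AU}).filter
          (fun u => ∃ w, f u = Sum.inl w)).card +
          ((Finset.univ : Finset {u // u ∈ AU}).filter
          (fun u => ¬ ∃ w, f u = Sum.inl w)).card = AU.card := by
        rw [Finset.card_filter_add_card_filter_not]
        simp [Fintype.card_coe]
      have h2 : ((Finset.univ : Finset {u // u ∈ AU}).filter
          (fun u => ¬ ∃ w, f u = Sum.inl w)).card ≤ D := by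
        have himg : (((Finset.univ : Finset {u // u ∈ AU}).filter
            (fun u => ¬ ∃ w, f u = Sum.inl w)).image f) ⊆
            ((Finset.univ : Finset (Fin D)).map ⟨Sum.inr, Sum.inr_injective⟩) := by
          intro x hx
          obtain ⟨u, hu, rfl⟩ := Finset.mem_image.1 hx
          rw [Finset.mem_filter] at hu
          rcases hfu : f u with w | d
          · exact absurd ⟨w, hfu⟩ hu.2
          · exact Finset.mem_map.2 ⟨d, Finset.mem_univ _, by simpa using hfu.symm⟩
        have := Finset.card_le_card himg
        rwa [Finset.card_image_of_injective _ hfinj, Finset.card_map,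
          Finset.card_univ, Fintype.card_fin] at this
      have h3 := Finset.card_le_card hcov
      rw [Finset.card_image_of_injective _ Subtype.val_injective] at h3
      omega
    have hsdiff : (AU \ S).card = AU.card - S.card := Finset.card_sdiff_of_subset hSsub
    have hScard : S.card ≤ AU.card := Finset.card_le_card hSsub
    omega

end Konig

section Count

variable {U W E : Type*} (eu : E → U) (ew : E → W)

noncomputable def gpair (f : E) : Finset (U ⊕ W) := {Sum.inl (eu f), Sum.inr (ew f)}

lemma mem_gpair {f : E} {v : U ⊕ W} :
    v ∈ gpair eu ew f ↔ v = Sum.inl (eu f) ∨ v = Sum.inr (ew f) := by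
  simp [gpair]

variable {eu ew}

lemma gpair_disjoint {M : Finset E} (hM : IsMatching eu ew M) :
    ∀ e ∈ M, ∀ f ∈ M, e ≠ f → Disjoint (gpair eu ew e) (gpair eu ew f) := by
  intro e he f hf hne
  obtain ⟨h1, h2⟩ := hM e he f hf hne
  rw [Finset.disjoint_left]
  intro v hv hv'
  rw [mem_gpair] at hv hv'
  rcases hv with rfl | rfl <;> rcases hv' with h | h <;> simp_all

lemma covered_iff_mem_biUnion {M : Finset E} {v : U ⊕ W} :
    Sum.elim (fun u => ∃ e ∈ M, eu e = u) (fun w => ∃ e ∈ M, ew e = w) v ↔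
      v ∈ M.biUnion (gpair eu ew) := by
  cases v with
  | inl u =>
    simp only [Sum.elim_inl, Finset.mem_biUnion, mem_gpair]
    constructor
    · rintro ⟨e, he, rfl⟩; exact ⟨e, he, Or.inl rfl⟩
    · rintro ⟨e, he, h | h⟩
      · exact ⟨e, he, (Sum.inl_injective h).symm⟩
      · exact absurd h (by simp)
  | inr w =>
    simp only [Sum.elim_inr, Finset.mem_biUnion, mem_gpair]
    constructor
    · rintro ⟨e, he, rfl⟩; exact ⟨e, he, Or.inr rfl⟩
    · rintro ⟨e, he, h | h⟩
      · exact absurd h (by simp)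
      · exact ⟨e, he, (Sum.inr_injective h).symm⟩

lemma card_inter_pair (C : Finset (U ⊕ W)) (f : E) :
    (C ∩ gpair eu ew f).card =
      (if Sum.inl (eu f) ∈ C then 1 else 0) + (if Sum.inr (ew f) ∈ C then 1 else 0) := by
  rw [Finset.inter_comm, ← Finset.filter_mem_eq_inter, gpair]
  rw [Finset.filter_insert]
  by_cases h1 : Sum.inl (eu f) ∈ C <;> by_cases h2 : Sum.inr (ew f) ∈ C <;>
    simp [h1, h2, Finset.filter_singleton, Finset.card_insert_of_notMem]

lemma critCovered_eq_sum {M : Finset E} (hM : IsMatching eu ew M) (C : Finset (U ⊕ W)) :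
    critCovered eu ew C M = ∑ f ∈ M,
      ((if Sum.inl (eu f) ∈ C then 1 else 0) + (if Sum.inr (ew f) ∈ C then 1 else 0)) := by
  have h1 : critCovered eu ew C M = (C ∩ M.biUnion (gpair eu ew)).card := by
    rw [critCovered, ← Finset.filter_mem_eq_inter]
    congr 1
    apply Finset.filter_congr
    intro v _
    simp [covered_iff_mem_biUnion]
  rw [h1, Finset.inter_biUnion, Finset.card_biUnion]
  · exact Finset.sum_congr rfl fun f _ => card_inter_pair C f
  · intro e he f hf hne
    exact Finset.disjoint_of_subset_left Finset.inter_subset_right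
      (Finset.disjoint_of_subset_right Finset.inter_subset_right
        (gpair_disjoint hM e he f hf hne))

lemma sum_y_eq {M : Finset E} (hM : IsMatching eu ew M) (y : U ⊕ W → ℕ) :
    ∑ f ∈ M, (y (Sum.inl (eu f)) + y (Sum.inr (ew f))) =
      ∑ v ∈ M.biUnion (gpair eu ew), y v := by
  rw [Finset.sum_biUnion]
  · apply Finset.sum_congr rfl
    intro f _
    rw [gpair, Finset.sum_insert (by simp), Finset.sum_singleton]
  · exact fun e he f hf hne => gpair_disjoint hM e he f hf hne

lemma sum_y_le {U W : Type*} [Fintype U] [Fintype W] {eu : E → U} {ew : E → W}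
    {M : Finset E} (hM : IsMatching eu ew M) (y : U ⊕ W → ℕ) :
    ∑ f ∈ M, (y (Sum.inl (eu f)) + y (Sum.inr (ew f))) ≤ ∑ v, y v := by
  rw [sum_y_eq hM y]
  exact Finset.sum_le_sum_of_subset (Finset.subset_univ _)

lemma sum_y_le_uncovered {U W : Type*} [Fintype U] [Fintype W] {eu : E → U} {ew : E → W}
    {M : Finset E} (hM : IsMatching eu ew M) (y : U ⊕ W → ℕ) (v0 : U ⊕ W)
    (hv0 : ¬ Sum.elim (fun u => ∃ e ∈ M, eu e = u) (fun w => ∃ e ∈ M, ew e = w) v0) :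
    y v0 + ∑ f ∈ M, (y (Sum.inl (eu f)) + y (Sum.inr (ew f))) ≤ ∑ v, y v := by
  rw [sum_y_eq hM y]
  have hnm : v0 ∉ M.biUnion (gpair eu ew) := fun h => hv0 (covered_iff_mem_biUnion.2 h)
  calc y v0 + ∑ v ∈ M.biUnion (gpair eu ew), y v
      = ∑ v ∈ insert v0 (M.biUnion (gpair eu ew)), y v := (Finset.sum_insert hnm).symm
    _ ≤ ∑ v, y v := Finset.sum_le_sum_of_subset (Finset.subset_univ _)

end Count

section Keys

/-- quadruple lexicographic key -/
noncomputable def mkK (a b : ℕ) (p : ℝ) (i : ℕ) : ℕ ×ₗ (ℕ ×ₗ (ℝ ×ₗ ℕ)) :=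
  toLex (a, toLex (b, toLex (p, i)))

lemma mkK_lt_iff {a b a' b' : ℕ} {p p' : ℝ} {i i' : ℕ} :
    mkK a b p i < mkK a' b' p' i' ↔
      a < a' ∨ (a = a' ∧ (b < b' ∨ (b = b' ∧ (p < p' ∨ (p = p' ∧ i < i'))))) := by
  rw [mkK, mkK, Prod.Lex.lt_iff]
  constructor
  · rintro (h | ⟨h, h2⟩)
    · exact Or.inl h
    · rw [Prod.Lex.lt_iff] at h2
      rcases h2 with h2 | ⟨h2, h3⟩
      · exact Or.inr ⟨h, Or.inl h2⟩
      · rw [Prod.Lex.lt_iff] at h3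
        exact Or.inr ⟨h, Or.inr ⟨h2, h3⟩⟩
  · rintro (h | ⟨h, h2 | ⟨h2, h3⟩⟩)
    · exact Or.inl h
    · exact Or.inr ⟨h, Prod.Lex.lt_iff |>.2 (Or.inl h2)⟩
    · exact Or.inr ⟨h, Prod.Lex.lt_iff |>.2 (Or.inr ⟨h2, Prod.Lex.lt_iff |>.2 h3⟩)⟩

lemma mkK_inj {a b a' b' : ℕ} {p p' : ℝ} {i i' : ℕ}
    (h : mkK a b p i = mkK a' b' p' i') : i = i' := by
  rw [mkK, mkK] at h
  have h1 := toLex.injective h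
  have h2 := toLex.injective (congrArg Prod.snd h1)
  have h3 := toLex.injective (congrArg Prod.snd h2)
  exact congrArg Prod.snd h3

end Keys

section AuxBasic

variable {U W E : Type*} {eu : E → U} {ew : E → W}

lemma IsMatching.symm' {M : Finset E} (h : IsMatching eu ew M) : IsMatching ew eu M :=
  fun e he f hf hne => ⟨(h e he f hf hne).2, (h e he f hf hne).1⟩

lemma matching_filter_eu [DecidableEq E] {M : Finset E} (hM : IsMatching eu ew M) {f1 : E}
    (hf1 : f1 ∈ M) {u : U} (hu : eu f1 = u) [DecidablePred (fun f => eu f = u)] :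
    M.filter (fun f => eu f = u) = {f1} := by
  ext f
  simp only [Finset.mem_filter, Finset.mem_singleton]
  constructor
  · rintro ⟨hf, hfu⟩
    by_contra hne
    exact (hM f hf f1 hf1 hne).1 (hfu.trans hu.symm)
  · rintro rfl
    exact ⟨hf1, hu⟩

lemma matching_filter_ew [DecidableEq E] {M : Finset E} (hM : IsMatching eu ew M) {f1 : E}
    (hf1 : f1 ∈ M) {w : W} (hw : ew f1 = w) [DecidablePred (fun f => ew f = w)] :
    M.filter (fun f => ew f = w) = {f1} := by
  ext f
  simp only [Finset.mem_filter, Finset.mem_singleton]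
  constructor
  · rintro ⟨hf, hfw⟩
    by_contra hne
    exact (hM f hf f1 hf1 hne).2 (hfw.trans hw.symm)
  · rintro rfl
    exact ⟨hf1, hw⟩

lemma valU_eq_of_mem [DecidableEq E] {pU : E → ℝ} {M : Finset E} (hM : IsMatching eu ew M)
    {f1 : E} (hf1 : f1 ∈ M) {u : U} (hu : eu f1 = u) : valU eu pU M u = pU f1 := by
  rw [valU, matching_filter_eu hM hf1 hu, Finset.sum_singleton]

lemma valW_eq_of_mem [DecidableEq E] {pW : E → ℝ} {M : Finset E} (hM : IsMatching eu ew M)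
    {f1 : E} (hf1 : f1 ∈ M) {w : W} (hw : ew f1 = w) : valW ew pW M w = pW f1 := by
  rw [valW, matching_filter_ew hM hf1 hw, Finset.sum_singleton]

lemma swapIn_matching [DecidableEq E] {M : Finset E} (hM : IsMatching eu ew M) (e : E)
    (he : e ∉ M) : IsMatching eu ew (swapIn eu ew M e) := by
  intro x hx y hy hne
  rw [swapIn, Finset.mem_insert] at hx hy
  rcases hx with rfl | hx <;> rcases hy with rfl | hy
  · exact absurd rfl hne
  · obtain ⟨-, hyu, hyw⟩ := Finset.mem_filter.1 hy
    exact ⟨Ne.symm hyu, Ne.symm hyw⟩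
  · obtain ⟨-, hxu, hxw⟩ := Finset.mem_filter.1 hx
    exact ⟨hxu, hxw⟩
  · exact hM x (Finset.mem_filter.1 hx).1 y (Finset.mem_filter.1 hy).1 hne

end AuxBasic

/-- For every finite bipartite multigraph with preference functions
(ties allowed) and critical vertices `C`, there is a critical matching `M` with no
blocking edge `e = (u, w)` such that `M \ {M(u), M(w)} ∪ {e}` is still critical. -/
theorem exists_critical_relaxed_stable {U W E : Type*} [Fintype U] [Fintype W]
    [Fintype E] [DecidableEq E]
    (eu : E → U) (ew : E → W) (pU pW : E → ℝ)
    (hpU : ∀ e, 0 ≤ pU e) (hpW : ∀ e, 0 ≤ pW e)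
    (C : Finset (U ⊕ W)) :
    ∃ M : Finset E, IsMatching eu ew M ∧ IsCritical eu ew C M ∧
      ∀ e, ¬ (Blocks eu ew pU pW M e ∧ IsCritical eu ew C (swapIn eu ew M e)) := by
  classical
  set cc : E → ℕ := fun e => (if Sum.inl (eu e) ∈ C then 1 else 0) +
    (if Sum.inr (ew e) ∈ C then 1 else 0) with hcc
  obtain ⟨yLU, yLW, ML, hMLm, hLfeas, hLcard⟩ :=
    konig_side eu ew (Finset.univ.filter (fun u => Sum.inl u ∈ C))
  obtain ⟨yRW, yRU, MR, hMRm, hRfeas, hRcard⟩ :=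
    konig_side ew eu (Finset.univ.filter (fun w => Sum.inr w ∈ C))
  set A := (Finset.univ.filter (fun u : U => Sum.inl u ∈ C)).filter
    (fun u => ∃ e ∈ ML, eu e = u) with hA
  set B := (Finset.univ.filter (fun w : W => Sum.inr w ∈ C)).filter
    (fun w => ∃ e ∈ MR, ew e = w) with hB
  obtain ⟨M0, hM0m, hM0A, hM0B⟩ := dm_main eu ew ML hMLm A B
    (fun u hu => (Finset.mem_filter.1 hu).2)
    ((A.filter (fun u => ¬ ∃ e ∈ MR, eu e = u)).card) MR hMRm.symm'
    (fun w hw => (Finset.mem_filter.1 hw).2) le_rfl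
  set y : U ⊕ W → ℕ := Sum.elim (fun u => yLU u + yRU u) (fun w => yLW w + yRW w) with hy
  have hfeas : ∀ e, cc e ≤ y (Sum.inl (eu e)) + y (Sum.inr (ew e)) := by
    intro e
    have h1 : (if Sum.inl (eu e) ∈ C then 1 else 0) ≤ yLU (eu e) + yLW (ew e) := by
      split_ifs with h
      · exact hLfeas e (Finset.mem_filter.2 ⟨Finset.mem_univ _, h⟩)
      · exact Nat.zero_le _
    have h2 : (if Sum.inr (ew e) ∈ C then 1 else 0) ≤ yRW (ew e) + yRU (eu e) := by
      split_ifs with h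
      · exact hRfeas e (Finset.mem_filter.2 ⟨Finset.mem_univ _, h⟩)
      · exact Nat.zero_le _
    simp only [hy, hcc, Sum.elim_inl, Sum.elim_inr]
    omega
  have hweak : ∀ N : Finset E, IsMatching eu ew N → critCovered eu ew C N ≤ ∑ v, y v := by
    intro N hN
    rw [critCovered_eq_sum hN C]
    calc ∑ f ∈ N, ((if Sum.inl (eu f) ∈ C then 1 else 0) +
          (if Sum.inr (ew f) ∈ C then 1 else 0))
        ≤ ∑ f ∈ N, (y (Sum.inl (eu f)) + y (Sum.inr (ew f))) :=
          Finset.sum_le_sum (fun f _ => hfeas f)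
      _ ≤ ∑ v, y v := sum_y_le hN y
  have hM0lower : ∑ v, y v ≤ critCovered eu ew C M0 := by
    have hsub : (A.image Sum.inl) ∪ (B.image Sum.inr) ⊆
        C.filter (fun v => Sum.elim (fun u => ∃ e ∈ M0, eu e = u)
          (fun w => ∃ e ∈ M0, ew e = w) v) := by
      intro v hv
      rcases Finset.mem_union.1 hv with hv | hv
      · obtain ⟨u, hu, rfl⟩ := Finset.mem_image.1 hv
        refine Finset.mem_filter.2 ⟨?_, ?_⟩
        · exact (Finset.mem_filter.1 ((Finset.mem_filter.1 hu).1)).2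
        · simpa using hM0A u hu
      · obtain ⟨w, hw, rfl⟩ := Finset.mem_image.1 hv
        refine Finset.mem_filter.2 ⟨?_, ?_⟩
        · exact (Finset.mem_filter.1 ((Finset.mem_filter.1 hw).1)).2
        · simpa using hM0B w hw
    have hdisj : Disjoint (A.image Sum.inl) (B.image Sum.inr) := by
      rw [Finset.disjoint_left]
      rintro v hv hv'
      obtain ⟨u, _, rfl⟩ := Finset.mem_image.1 hv
      obtain ⟨w, _, h⟩ := Finset.mem_image.1 hv'
      exact Sum.inl_ne_inr h.symm
    have hcard := Finset.card_le_card hsub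
    rw [Finset.card_union_of_disjoint hdisj,
      Finset.card_image_of_injective _ Sum.inl_injective,
      Finset.card_image_of_injective _ Sum.inr_injective] at hcard
    have hsum : ∑ v, y v = ((∑ u, yLU u) + (∑ w, yLW w)) + ((∑ w, yRW w) + (∑ u, yRU u)) := by
      rw [hy, Fintype.sum_sum_type]
      simp only [Sum.elim_inl, Sum.elim_inr]
      rw [Finset.sum_add_distrib, Finset.sum_add_distrib]
      ring
    rw [critCovered]
    omega
  have hM0crit : critCovered eu ew C M0 = ∑ v, y v := le_antisymm (hweak M0 hM0m) hM0lower
  have hM0cc : ∑ f ∈ M0, cc f = ∑ v, y v := by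
    rw [← hM0crit, critCovered_eq_sum hM0m C]
  have hM0sum : ∑ f ∈ M0, (y (Sum.inl (eu f)) + y (Sum.inr (ew f))) = ∑ v, y v := by
    have h2 := sum_y_le hM0m y
    have h3 := Finset.sum_le_sum (fun f (_ : f ∈ M0) => hfeas f)
    omega
  have hM0tight : ∀ f ∈ M0, y (Sum.inl (eu f)) + y (Sum.inr (ew f)) ≤ cc f := by
    intro f hf
    by_contra hc
    push_neg at hc
    have h3 := Finset.sum_lt_sum (fun i (_ : i ∈ M0) => hfeas i) ⟨f, hf, hc⟩
    omega
  have hM0cov : ∀ v, 0 < y v →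
      Sum.elim (fun u => ∃ e ∈ M0, eu e = u) (fun w => ∃ e ∈ M0, ew e = w) v := by
    intro v hv
    by_contra hc
    have h1 := sum_y_le_uncovered hM0m y v hc
    omega
  set Estar := Finset.univ.filter
    (fun e => y (Sum.inl (eu e)) + y (Sum.inr (ew e)) ≤ cc e) with hEstar
  set X := Finset.univ.filter (fun v : U ⊕ W => 0 < y v) with hX
  set idx : E → ℕ := fun e => ((Fintype.equivFin E) e : ℕ) with hidx
  set kU : E → ℕ ×ₗ (ℕ ×ₗ (ℝ ×ₗ ℕ)) := fun e => mkK (if Sum.inr (ew e) ∈ X then 1 else 0)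
    (if (Sum.inr (ew e) ∈ X ∧ ∃ g ∈ M0, eu g = eu e ∧ ew g = ew e) then 1 else 0)
    (pU e) (idx e) with hkUdef
  set kW : E → ℕ ×ₗ (ℕ ×ₗ (ℝ ×ₗ ℕ)) := fun e => mkK (if Sum.inl (eu e) ∈ X then 1 else 0)
    (if (Sum.inl (eu e) ∈ X ∧ ∃ g ∈ M0, eu g = eu e ∧ ew g = ew e) then 1 else 0)
    (pW e) (idx e) with hkWdef
  have hidxinj : Function.Injective idx :=
    fun a b h => (Fintype.equivFin E).injective (Fin.val_injective h)
  have hkU : Function.Injective kU := fun a b h => hidxinj (mkK_inj h)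
  have hkW : Function.Injective kW := fun a b h => hidxinj (mkK_inj h)
  obtain ⟨M, hME, hMm, hMst⟩ := exists_stable eu ew kU kW hkU hkW Estar
  have hM0E : ∀ f ∈ M0, f ∈ Estar :=
    fun f hf => Finset.mem_filter.2 ⟨Finset.mem_univ _, hM0tight f hf⟩
  have hifle : ∀ (P : Prop), (if P then 1 else 0 : ℕ) ≤ 1 := by
    intro P; split_ifs <;> omega
  -- coverage of X by M
  have hcovW : ∀ w : W, Sum.inr w ∈ X → ∃ e ∈ M, ew e = w := by
    intro w hw
    have hcv := hM0cov (Sum.inr w) ((Finset.mem_filter.1 hw).2)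
    simp only [Sum.elim_inr] at hcv
    obtain ⟨g, hg, hgw⟩ := hcv
    by_cases hgM : g ∈ M
    · exact ⟨g, hgM, hgw⟩
    rcases hMst g (hM0E g hg) hgM with ⟨f, hfM, hfu, hlt⟩ | ⟨f, hfM, hfw, -⟩
    · have htg : Sum.inr (ew g) ∈ X := by rw [hgw]; exact hw
      have hcg : Sum.inr (ew g) ∈ X ∧ ∃ g' ∈ M0, eu g' = eu g ∧ ew g' = ew g :=
        ⟨htg, g, hg, rfl, rfl⟩
      simp only [hkUdef] at hlt
      rw [mkK_lt_iff, if_pos htg, if_pos hcg] at hlt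
      have hcf' : ∃ g' ∈ M0, eu g' = eu f ∧ ew g' = ew f := by
        by_cases hq : _root_.And (@Membership.mem _ _ SetLike.instMembership X (Sum.inr (ew f))) (∃ g' ∈ M0, eu g' = eu f ∧ ew g' = ew f)
        · exact hq.2
        · rw [if_neg hq] at hlt
          rcases hlt with h | ⟨-, h | ⟨h, -⟩⟩
          · split_ifs at h <;> omega
          · omega
          · omega
      obtain ⟨g', hg', hg'u, hg'w⟩ := hcf'
      have hgg : g' = g := by
        by_contra hne
        exact (hM0m g' hg' g hg hne).1 (hg'u.trans hfu)
      exact ⟨f, hfM, by rw [← hg'w, hgg, hgw]⟩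
    · exact ⟨f, hfM, hfw.trans hgw⟩
  have hcovU : ∀ u : U, Sum.inl u ∈ X → ∃ e ∈ M, eu e = u := by
    intro u hu
    have hcv := hM0cov (Sum.inl u) ((Finset.mem_filter.1 hu).2)
    simp only [Sum.elim_inl] at hcv
    obtain ⟨g, hg, hgu⟩ := hcv
    by_cases hgM : g ∈ M
    · exact ⟨g, hgM, hgu⟩
    rcases hMst g (hM0E g hg) hgM with ⟨f, hfM, hfu, -⟩ | ⟨f, hfM, hfw, hlt⟩
    · exact ⟨f, hfM, hfu.trans hgu⟩
    · have htg : Sum.inl (eu g) ∈ X := by rw [hgu]; exact hu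
      have hcg : Sum.inl (eu g) ∈ X ∧ ∃ g' ∈ M0, eu g' = eu g ∧ ew g' = ew g :=
        ⟨htg, g, hg, rfl, rfl⟩
      simp only [hkWdef] at hlt
      rw [mkK_lt_iff, if_pos htg, if_pos hcg] at hlt
      have hcf' : ∃ g' ∈ M0, eu g' = eu f ∧ ew g' = ew f := by
        by_cases hq : _root_.And (@Membership.mem _ _ SetLike.instMembership X (Sum.inl (eu f))) (∃ g' ∈ M0, eu g' = eu f ∧ ew g' = ew f)
        · exact hq.2
        · rw [if_neg hq] at hlt
          rcases hlt with h | ⟨-, h | ⟨h, -⟩⟩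
          · split_ifs at h <;> omega
          · omega
          · omega
      obtain ⟨g', hg', hg'u, hg'w⟩ := hcf'
      have hgg : g' = g := by
        by_contra hne
        exact (hM0m g' hg' g hg hne).2 (hg'w.trans hfw)
      exact ⟨f, hfM, by rw [← hg'u, hgg, hgu]⟩
  -- criticality of M
  have hMtight : ∀ f ∈ M, y (Sum.inl (eu f)) + y (Sum.inr (ew f)) = cc f := fun f hf =>
    le_antisymm ((Finset.mem_filter.1 (hME hf)).2) (hfeas f)
  have hMk : critCovered eu ew C M = ∑ v, y v := by
    rw [critCovered_eq_sum hMm C]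
    have h2 : ∑ f ∈ M, cc f = ∑ f ∈ M, (y (Sum.inl (eu f)) + y (Sum.inr (ew f))) :=
      Finset.sum_congr rfl (fun f hf => (hMtight f hf).symm)
    have h3 := sum_y_eq hMm y
    have h4 : ∑ v ∈ M.biUnion (gpair eu ew), y v = ∑ v, y v := by
      apply Finset.sum_subset (Finset.subset_univ _)
      intro v _ hv
      by_contra hvy
      have hvX : 0 < y v := Nat.pos_of_ne_zero hvy
      have hcov : Sum.elim (fun u => ∃ e ∈ M, eu e = u) (fun w => ∃ e ∈ M, ew e = w) v := by
        cases v with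
        | inl u => simpa using hcovU u (Finset.mem_filter.2 ⟨Finset.mem_univ _, hvX⟩)
        | inr w => simpa using hcovW w (Finset.mem_filter.2 ⟨Finset.mem_univ _, hvX⟩)
      exact hv (covered_iff_mem_biUnion.1 hcov)
    rw [← hcc] at h2 ⊢
    rw [h2, h3, h4]
  refine ⟨M, hMm, ?_, ?_⟩
  · intro N hN
    rw [hMk]
    exact hweak N hN
  · rintro e ⟨⟨heM, hbu, hbw⟩, hcrit⟩
    have hswm := swapIn_matching hMm e heM
    have hkM : ∑ v, y v ≤ critCovered eu ew C (swapIn eu ew M e) := by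
      rw [← hMk]; exact hcrit M hMm
    have hswsum : critCovered eu ew C (swapIn eu ew M e) = ∑ f ∈ swapIn eu ew M e, cc f := by
      rw [critCovered_eq_sum hswm C, ← hcc]
    have henotin : e ∉ M.filter (fun f => eu f ≠ eu e ∧ ew f ≠ ew e) :=
      fun h => heM (Finset.mem_filter.1 h).1
    have hswfeas := Finset.sum_le_sum (fun f (_ : f ∈ swapIn eu ew M e) => hfeas f)
    have hswy := sum_y_le hswm y
    have main_bound : ∀ v0 : U ⊕ W, 0 < y v0 →
        (¬ Sum.elim (fun u => ∃ f ∈ swapIn eu ew M e, eu f = u)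
          (fun w => ∃ f ∈ swapIn eu ew M e, ew f = w) v0) → False := by
      intro v0 hv0 hunc
      have h1 := sum_y_le_uncovered hswm y v0 hunc
      omega
    by_cases heE : e ∈ Estar
    · rcases hMst e heE heM with ⟨f, hfM, hfu, hlt⟩ | ⟨f, hfM, hfw, hlt⟩
      · have hpf : pU f < pU e := by
          rw [valU_eq_of_mem hMm hfM hfu] at hbu
          exact hbu
        by_cases hfw : ew f = ew e
        · simp only [hkUdef] at hlt
          rw [mkK_lt_iff] at hlt
          rw [hfu, hfw] at hlt
          rcases hlt with h | ⟨-, h | ⟨-, h | ⟨h, -⟩⟩⟩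
          · omega
          · omega
          · linarith
          · linarith
        · by_cases hfX : Sum.inr (ew f) ∈ X
          · apply main_bound (Sum.inr (ew f)) ((Finset.mem_filter.1 hfX).2)
            simp only [Sum.elim_inr]
            rintro ⟨g, hg, hgw⟩
            rw [swapIn, Finset.mem_insert] at hg
            rcases hg with rfl | hg
            · exact hfw hgw.symm
            · obtain ⟨hgM, hgu, -⟩ := Finset.mem_filter.1 hg
              have hgf : g = f := by
                by_contra hne
                exact (hMm g hgM f hfM hne).2 hgw
              rw [hgf] at hgu
              exact hgu hfu
          · have hfc : ¬ (Sum.inr (ew f) ∈ X ∧ ∃ g' ∈ M0, eu g' = eu f ∧ ew g' = ew f) :=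
              fun h => hfX h.1
            simp only [hkUdef] at hlt
            rw [mkK_lt_iff, if_neg hfX, if_neg hfc] at hlt
            rcases hlt with h | ⟨-, h | ⟨-, h | ⟨h, -⟩⟩⟩
            · omega
            · omega
            · linarith
            · linarith
      · have hpf : pW f < pW e := by
          rw [valW_eq_of_mem hMm hfM hfw] at hbw
          exact hbw
        by_cases hfu : eu f = eu e
        · simp only [hkWdef] at hlt
          rw [mkK_lt_iff] at hlt
          rw [hfu, hfw] at hlt
          rcases hlt with h | ⟨-, h | ⟨-, h | ⟨h, -⟩⟩⟩
          · omega
          · omega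
          · linarith
          · linarith
        · by_cases hfX : Sum.inl (eu f) ∈ X
          · apply main_bound (Sum.inl (eu f)) ((Finset.mem_filter.1 hfX).2)
            simp only [Sum.elim_inl]
            rintro ⟨g, hg, hgu⟩
            rw [swapIn, Finset.mem_insert] at hg
            rcases hg with rfl | hg
            · exact hfu hgu.symm
            · obtain ⟨hgM, -, hgw⟩ := Finset.mem_filter.1 hg
              have hgf : g = f := by
                by_contra hne
                exact (hMm g hgM f hfM hne).1 hgu
              rw [hgf] at hgw
              exact hgw hfw
          · have hfc : ¬ (Sum.inl (eu f) ∈ X ∧ ∃ g' ∈ M0, eu g' = eu f ∧ ew g' = ew f) :=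
              fun h => hfX h.1
            simp only [hkWdef] at hlt
            rw [mkK_lt_iff, if_neg hfX, if_neg hfc] at hlt
            rcases hlt with h | ⟨-, h | ⟨-, h | ⟨h, -⟩⟩⟩
            · omega
            · omega
            · linarith
            · linarith
    · have hslack : cc e + 1 ≤ y (Sum.inl (eu e)) + y (Sum.inr (ew e)) := by
        rw [hEstar, Finset.mem_filter] at heE
        push_neg at heE
        have := heE (Finset.mem_univ e)
        omega
      have hsw1 : ∑ f ∈ swapIn eu ew M e, cc f + 1 ≤
          ∑ f ∈ swapIn eu ew M e, (y (Sum.inl (eu f)) + y (Sum.inr (ew f))) := by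
        rw [swapIn, Finset.sum_insert henotin, Finset.sum_insert henotin]
        have h2 := Finset.sum_le_sum
          (fun f (_ : f ∈ M.filter (fun f => eu f ≠ eu e ∧ ew f ≠ ew e)) => hfeas f)
        omega
      omega
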